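/- Let ≻₁ and ≻₂ be two strict linear orders on a finite set A of m alternatives, let rk₁(a) = |{b ∈ A : b ≻₁ a}|, and consider the embedding with E(v₁) = (−m², 0) and E(a) = (rk₁(a), rk₂(a)) where 0 ≤ rk₂(a) ≤ m − 1. Then for any two alternatives a, b with a ≻₁ b one has ‖E(a) − E(v₁)‖ < m² + rk₁(a) + 1 ≤ m² + rk₁(b) ≤ ‖E(b) − E(v₁)‖, where ‖·‖ is the Euclidean distance in ℝ²; in particular a ≻₁ b implies ‖E(a) − E(v₁)‖ < ‖E(b) − E(v₁)‖. -/
import Mathlib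


/-- The point `(x, y)` in the Euclidean plane `ℝ²`. -/
noncomputable def pt (x y : ℝ) : EuclideanSpace ℝ (Fin 2) :=
  (WithLp.equiv 2 (Fin 2 → ℝ)).symm ![x, y]

lemma dist_pt (x y m : ℝ) :
    dist (pt x y) (pt (-(m : ℝ) ^ 2) 0) = Real.sqrt ((x + m ^ 2) ^ 2 + y ^ 2) := by
  rw [EuclideanSpace.dist_eq]
  congr 1
  rw [Fin.sum_univ_two]
  simp [pt, Real.dist_eq, sq_abs]

/-- Let `≻₁` be a strict linear order on a finite set `A` of `m` alternatives, let
`rk₁ a` be the number of alternatives strictly preferred to `a` by voter `1`, and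
consider the embedding placing voter `1` at `(−m², 0)` and each alternative `a` at
`(rk₁ a, rk₂ a)`, where `0 ≤ rk₂ a ≤ m − 1`.  Then for any alternatives `a, b` with
`a ≻₁ b` we have the chain
`‖E(a) − E(v₁)‖ < m² + rk₁(a) + 1 ≤ m² + rk₁(b) ≤ ‖E(b) − E(v₁)‖`;
in particular `a ≻₁ b` implies `‖E(a) − E(v₁)‖ < ‖E(b) − E(v₁)‖`. -/
theorem rank_embedding_first_voter_chain
    {A : Type*} [Fintype A]
    (pref₁ : A → A → Prop)
    (hpref₁ : IsStrictTotalOrder A pref₁)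
    (m : ℕ) (hm : Fintype.card A = m)
    (rk₁ : A → ℕ)
    (hrk₁ : ∀ a, rk₁ a = Nat.card {b : A // pref₁ b a})
    (rk₂ : A → ℕ)
    (hrk₂ : ∀ a, rk₂ a ≤ m - 1)
    (Ev : EuclideanSpace ℝ (Fin 2))
    (hEv : Ev = pt (-(m : ℝ) ^ 2) 0)
    (EA : A → EuclideanSpace ℝ (Fin 2))
    (hEA : ∀ a, EA a = pt (rk₁ a) (rk₂ a)) :
    ∀ a b : A, pref₁ a b →
      dist (EA a) Ev < (m : ℝ) ^ 2 + rk₁ a + 1 ∧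
      (m : ℝ) ^ 2 + rk₁ a + 1 ≤ (m : ℝ) ^ 2 + rk₁ b ∧
      (m : ℝ) ^ 2 + rk₁ b ≤ dist (EA b) Ev ∧
      dist (EA a) Ev < dist (EA b) Ev := by
  classical
  intro a b hab
  have hm1 : 1 ≤ m := by
    rw [← hm]
    exact Fintype.card_pos_iff.mpr ⟨a⟩
  -- rk₁ a < rk₁ b
  have hrklt : rk₁ a < rk₁ b := by
    rw [hrk₁, hrk₁, Nat.card_eq_fintype_card, Nat.card_eq_fintype_card,
      Fintype.card_subtype, Fintype.card_subtype]
    apply Finset.card_lt_card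
    constructor
    · intro c hc
      simp only [Finset.mem_filter, Finset.mem_univ, true_and] at *
      exact hpref₁.trans c a b hc hab
    · intro h
      have := h (Finset.mem_filter.mpr ⟨Finset.mem_univ a, hab⟩)
      simp only [Finset.mem_filter, Finset.mem_univ, true_and] at this
      exact hpref₁.irrefl a this
  have hmid : (m : ℝ) ^ 2 + rk₁ a + 1 ≤ (m : ℝ) ^ 2 + rk₁ b := by
    have : (rk₁ a : ℝ) + 1 ≤ rk₁ b := by exact_mod_cast hrklt
    linarith
  -- rk₂ a ≤ m - 1 in ℝ
  have hrk2a : (rk₂ a : ℝ) ≤ (m : ℝ) - 1 := by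
    have h := hrk₂ a
    have : rk₂ a + 1 ≤ m := by omega
    have := (Nat.cast_le (α := ℝ)).mpr this
    push_cast at this
    linarith
  have hda : dist (EA a) Ev = Real.sqrt (((rk₁ a : ℝ) + m ^ 2) ^ 2 + (rk₂ a : ℝ) ^ 2) := by
    rw [hEA, hEv, dist_pt]
  have hdb : dist (EA b) Ev = Real.sqrt (((rk₁ b : ℝ) + m ^ 2) ^ 2 + (rk₂ b : ℝ) ^ 2) := by
    rw [hEA, hEv, dist_pt]
  have hmR : (1 : ℝ) ≤ m := by exact_mod_cast hm1
  have h1 : dist (EA a) Ev < (m : ℝ) ^ 2 + rk₁ a + 1 := by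
    rw [hda]
    rw [show (m : ℝ) ^ 2 + rk₁ a + 1 = ((rk₁ a : ℝ) + m ^ 2) + 1 by ring]
    have hpos : (0 : ℝ) < ((rk₁ a : ℝ) + m ^ 2) + 1 := by positivity
    rw [Real.sqrt_lt' hpos]
    have h2a : (0 : ℝ) ≤ (rk₂ a : ℝ) := by positivity
    nlinarith [Nat.cast_nonneg (α := ℝ) (rk₁ a)]
  have h3 : (m : ℝ) ^ 2 + rk₁ b ≤ dist (EA b) Ev := by
    rw [hdb]
    rw [show (m : ℝ) ^ 2 + rk₁ b = ((rk₁ b : ℝ) + m ^ 2) by ring]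
    rw [Real.le_sqrt (by positivity) (by positivity)]
    nlinarith [sq_nonneg ((rk₂ b : ℝ))]
  exact ⟨h1, hmid, h3, lt_of_lt_of_le h1 (le_trans hmid h3)⟩
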